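/- For all 0 ≤ t ≤ s ≤ T, one has (2/α)·e^{−(2/α)·(A(s) − A(t))}·y(s) = f₁(t,s,T), i.e. (2/α)·e^{−(2/α)·(A(s)−A(t))}·y(s) = ω·(e^{−ω(s−t)} − u·e^{−ω(2T−s−t)})/(1 + u·e^{−2ω(T−t)}). -/

import Mathlib

/-- For all `0 ≤ t ≤ s ≤ T`, one has `(2/α)·e^{−(2/α)(A(s) − A(t))}·y(s) = f₁(t,s,T)`. -/
theorem stmt_4 (α β γ T : ℝ) (hα : 0 < α) (hβ : 0 < β) (hγ : 0 < γ) (hT : 0 < T)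
    (ω u : ℝ) (hω : ω = Real.sqrt (β / α))
    (hu : u = (Real.sqrt (α * β) - γ) / (Real.sqrt (α * β) + γ))
    (y : ℝ → ℝ)
    (hy : ∀ t, y t = (Real.sqrt (α * β) / 2) *
      (1 - u * Real.exp (-2 * ω * (T - t))) / (1 + u * Real.exp (-2 * ω * (T - t))))
    (A : ℝ → ℝ) (hA : ∀ t, A t = -∫ s in t..T, y s)
    (f₁ : ℝ → ℝ → ℝ)
    (hf₁ : ∀ t s, f₁ t s = ω * (Real.exp (-ω * (s - t)) - u * Real.exp (-ω * (2 * T - s - t))) /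
      (1 + u * Real.exp (-2 * ω * (T - t)))) :
    ∀ t s, 0 ≤ t → t ≤ s → s ≤ T →
      (2 / α) * Real.exp (-(2 / α) * (A s - A t)) * y s = f₁ t s := by
  have hω0 : 0 < ω := by
    rw [hω]; exact Real.sqrt_pos.mpr (div_pos hβ hα)
  have habω : Real.sqrt (α * β) = α * ω := by
    rw [hω, ← Real.sqrt_sq hα.le, ← Real.sqrt_mul (sq_nonneg α)]
    congr 1; field_simp; rw [Real.sq_sqrt (sq_nonneg α)]
  have hs0 : 0 < Real.sqrt (α * β) := Real.sqrt_pos.mpr (mul_pos hα hβ)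
  have hu1 : |u| < 1 := by
    rw [hu, abs_div, abs_of_pos (by linarith : (0:ℝ) < Real.sqrt (α * β) + γ),
      div_lt_one (by linarith)]
    rw [abs_sub_lt_iff]; constructor <;> linarith
  have hL : ∀ r : ℝ, r ≤ T → 0 < 1 + u * Real.exp (-2 * ω * (T - r)) := by
    intro r hr
    have he : Real.exp (-2 * ω * (T - r)) ≤ 1 := by
      rw [Real.exp_le_one_iff]; nlinarith
    have he0 : 0 < Real.exp (-2 * ω * (T - r)) := Real.exp_pos _
    have : |u * Real.exp (-2 * ω * (T - r))| < 1 := by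
      rw [abs_mul, abs_of_pos he0]
      calc |u| * Real.exp (-2 * ω * (T - r)) ≤ |u| * 1 :=
            mul_le_mul_of_nonneg_left he (abs_nonneg _)
        _ < 1 := by simpa using hu1
    have := abs_lt.mp this
    linarith [this.1]
  -- continuity of y on Iic T
  have ycont : ContinuousOn y (Set.Iic T) := by
    have hyeq : y = fun r => (Real.sqrt (α * β) / 2) *
        (1 - u * Real.exp (-2 * ω * (T - r))) / (1 + u * Real.exp (-2 * ω * (T - r))) :=
      funext hy
    rw [hyeq]
    apply ContinuousOn.div
    · fun_prop
    · fun_prop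
    · intro r hr; exact (hL r hr).ne'
  have yint : ∀ a b : ℝ, a ≤ T → b ≤ T → IntervalIntegrable y MeasureTheory.volume a b := by
    intro a b ha hb
    apply (ycont.mono ?_).intervalIntegrable
    intro r hr
    rcases Set.mem_uIcc.mp hr with h | h
    · exact le_trans h.2 hb
    · exact le_trans h.2 ha
  -- antiderivative
  set F : ℝ → ℝ := fun r => (α / 2) * (ω * r - Real.log (1 + u * Real.exp (-2 * ω * (T - r))))
    with hF
  have hderiv : ∀ r : ℝ, r ≤ T → HasDerivAt F (y r) r := by
    intro r hr
    have h1 : HasDerivAt (fun x : ℝ => -2 * ω * (T - x)) (2 * ω) r := by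
      have := ((hasDerivAt_id r).const_sub T).const_mul (-2 * ω)
      simpa using this
    have h2 := h1.exp
    have h3 := (h2.const_mul u).const_add 1
    have h4 := h3.log (hL r hr).ne'
    have h5 : HasDerivAt (fun x : ℝ => ω * x) ω r := by
      simpa using (hasDerivAt_id r).const_mul ω
    have h6 := ((h5.sub h4).const_mul (α / 2))
    convert h6 using 1
    · rfl
    · rfl
    · rfl
    rw [hy r, habω]
    have hLr : (1:ℝ) + u * Real.exp (-2 * ω * (T - r)) ≠ 0 := (hL r hr).ne'
    set E := Real.exp (-2 * ω * (T - r)) with hE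
    field_simp
    ring
  have key : ∀ a b : ℝ, a ≤ b → b ≤ T → (∫ r in a..b, y r) = F b - F a := by
    intro a b hab hbT
    apply intervalIntegral.integral_eq_sub_of_hasDerivAt
    · intro r hr
      rw [Set.uIcc_of_le hab] at hr
      exact hderiv r (le_trans hr.2 hbT)
    · exact yint a b (le_trans hab hbT) hbT
  intro t s ht hts hsT
  have htT : t ≤ T := le_trans hts hsT
  have hAdiff : A s - A t = F s - F t := by
    rw [hA s, hA t]
    have hadd : (∫ r in t..s, y r) + (∫ r in s..T, y r) = ∫ r in t..T, y r :=
      intervalIntegral.integral_add_adjacent_intervals (yint t s htT hsT) (yint s T hsT le_rfl)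
    have := key t s hts hsT
    linarith
  rw [hAdiff, hf₁ t s, hy s, hF]
  have hLs := hL s hsT
  have hLt := hL t htT
  have hexp : Real.exp (-(2 / α) * ((α / 2) * (ω * s - Real.log (1 + u * Real.exp (-2 * ω * (T - s))))
      - (α / 2) * (ω * t - Real.log (1 + u * Real.exp (-2 * ω * (T - t)))))) =
      Real.exp (-ω * (s - t)) * (1 + u * Real.exp (-2 * ω * (T - s))) /
        (1 + u * Real.exp (-2 * ω * (T - t))) := by
    have : -(2 / α) * ((α / 2) * (ω * s - Real.log (1 + u * Real.exp (-2 * ω * (T - s))))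
        - (α / 2) * (ω * t - Real.log (1 + u * Real.exp (-2 * ω * (T - t))))) =
        -ω * (s - t) + Real.log (1 + u * Real.exp (-2 * ω * (T - s)))
          - Real.log (1 + u * Real.exp (-2 * ω * (T - t))) := by
      field_simp
      ring
    rw [this, Real.exp_sub, Real.exp_add, Real.exp_log hLs, Real.exp_log hLt]
  rw [hexp, habω]
  have hsplit : Real.exp (-ω * (2 * T - s - t)) =
      Real.exp (-ω * (s - t)) * Real.exp (-2 * ω * (T - s)) := by
    rw [← Real.exp_add]; ring_nf
  rw [hsplit]
  have hLs' : (1:ℝ) + u * Real.exp (-2 * ω * (T - s)) ≠ 0 := hLs.ne'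
  have hLt' : (1:ℝ) + u * Real.exp (-2 * ω * (T - t)) ≠ 0 := hLt.ne'
  set E1 := Real.exp (-ω * (s - t)) with hE1
  set Es := Real.exp (-2 * ω * (T - s)) with hEs
  set Et := Real.exp (-2 * ω * (T - t)) with hEt
  field_simp
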